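/- Let G be a (simple) graph on n vertices with at least n²/r² edges, where r is a positive integer. Then there exist r vertices v₁,…,v_r of G such that the union of their neighbourhoods N(v₁) ∪ ⋯ ∪ N(v_r) has cardinality at least n/r. -/

import Mathlib

open scoped BigOperators Classical

noncomputable def pickV {n : ℕ} (G : SimpleGraph (Fin n)) (hn : 0 < n)
    (S : Finset (Fin n)) : Fin n :=
  (Finset.exists_max_image Finset.univ (fun v => (G.neighborFinset v \ S).card)
    ⟨⟨0, hn⟩, Finset.mem_univ _⟩).choose

lemma pickV_spec {n : ℕ} (G : SimpleGraph (Fin n)) (hn : 0 < n) (S : Finset (Fin n))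
    (v : Fin n) :
    (G.neighborFinset v \ S).card ≤ (G.neighborFinset (pickV G hn S) \ S).card := by
  have h := (Finset.exists_max_image Finset.univ
    (fun v => (G.neighborFinset v \ S).card) ⟨⟨0, hn⟩, Finset.mem_univ _⟩).choose_spec
  exact h.2 v (Finset.mem_univ v)

noncomputable def greedyS {n : ℕ} (G : SimpleGraph (Fin n)) (hn : 0 < n) : ℕ → Finset (Fin n)
  | 0 => ∅
  | (i+1) => greedyS G hn i ∪ G.neighborFinset (pickV G hn (greedyS G hn i))

lemma key_step {n r : ℕ} (hn : 0 < n) (hr : 0 < r) (G : SimpleGraph (Fin n))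
    (hE : ((n : ℝ) ^ 2 / (r : ℝ) ^ 2) ≤ (G.edgeFinset.card : ℝ))
    (hdeg : ∀ v : Fin n, (G.degree v : ℝ) < (n : ℝ) / r)
    (S : Finset (Fin n)) (hS : (S.card : ℝ) < (n : ℝ) / r) :
    (n : ℝ) / (r : ℝ) ^ 2 ≤ ((G.neighborFinset (pickV G hn S) \ S).card : ℝ) := by
  have hn' : (0:ℝ) < n := by exact_mod_cast hn
  have hr' : (0:ℝ) < r := by exact_mod_cast hr
  -- double counting
  have h1 : ∀ v : Fin n, (G.neighborFinset v \ S)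
      = (Finset.univ \ S).filter (fun w => G.Adj v w) := by
    intro v; ext w
    simp [SimpleGraph.mem_neighborFinset, and_comm]
  have hdouble : ∑ v : Fin n, ((G.neighborFinset v \ S).card : ℝ)
      = ∑ w ∈ Finset.univ \ S, (G.degree w : ℝ) := by
    have : ∀ w : Fin n, ((Finset.univ.filter (fun v => G.Adj v w)).card : ℝ)
        = (G.degree w : ℝ) := by
      intro w
      congr 1
      rw [← SimpleGraph.card_neighborFinset_eq_degree]
      congr 1
      ext v
      simp [SimpleGraph.mem_neighborFinset, SimpleGraph.adj_comm]
    calc ∑ v : Fin n, ((G.neighborFinset v \ S).card : ℝ)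
        = ∑ v : Fin n, ∑ w ∈ Finset.univ \ S, (if G.Adj v w then (1:ℝ) else 0) := by
          refine Finset.sum_congr rfl fun v _ => ?_
          rw [h1 v, Finset.card_filter]
          push_cast
          rfl
      _ = ∑ w ∈ Finset.univ \ S, ∑ v : Fin n, (if G.Adj v w then (1:ℝ) else 0) :=
          Finset.sum_comm
      _ = ∑ w ∈ Finset.univ \ S, (G.degree w : ℝ) := by
          refine Finset.sum_congr rfl fun w _ => ?_
          rw [Finset.sum_boole]
          exact this w
  -- lower bound on the sum
  have hsumS : ∑ w ∈ S, (G.degree w : ℝ) ≤ (S.card : ℝ) * ((n:ℝ)/r) := by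
    calc ∑ w ∈ S, (G.degree w : ℝ) ≤ ∑ _w ∈ S, ((n:ℝ)/r) :=
          Finset.sum_le_sum fun w _ => (hdeg w).le
      _ = (S.card : ℝ) * ((n:ℝ)/r) := by rw [Finset.sum_const, nsmul_eq_mul]
  have htot : ∑ w : Fin n, (G.degree w : ℝ) = 2 * (G.edgeFinset.card : ℝ) := by
    exact_mod_cast congrArg (Nat.cast : ℕ → ℝ) (G.sum_degrees_eq_twice_card_edges)
  have hsplit : ∑ w : Fin n, (G.degree w : ℝ)
      = ∑ w ∈ S, (G.degree w : ℝ) + ∑ w ∈ Finset.univ \ S, (G.degree w : ℝ) := by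
    rw [← Finset.sum_sdiff (Finset.subset_univ S)]; ring
  have hlow : (n:ℝ)^2 / (r:ℝ)^2 ≤ ∑ w ∈ Finset.univ \ S, (G.degree w : ℝ) := by
    have h2 : (S.card : ℝ) * ((n:ℝ)/r) ≤ ((n:ℝ)/r) * ((n:ℝ)/r) :=
      mul_le_mul_of_nonneg_right hS.le (by positivity)
    have h3 : ∑ w ∈ S, (G.degree w : ℝ) ≤ (n:ℝ)^2/(r:ℝ)^2 := by
      calc ∑ w ∈ S, (G.degree w : ℝ) ≤ (S.card : ℝ) * ((n:ℝ)/r) := hsumS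
        _ ≤ ((n:ℝ)/r) * ((n:ℝ)/r) := h2
        _ = (n:ℝ)^2/(r:ℝ)^2 := by ring
    have h4 : 2 * ((n:ℝ)^2/(r:ℝ)^2) ≤ ∑ w : Fin n, (G.degree w : ℝ) := by
      rw [htot]; linarith
    linarith [hsplit]
  -- existence of a good vertex
  have hex : ∃ v : Fin n, (n:ℝ)/(r:ℝ)^2 ≤ ((G.neighborFinset v \ S).card : ℝ) := by
    have hsum : ∑ _v : Fin n, ((n:ℝ)/(r:ℝ)^2)
        ≤ ∑ v : Fin n, ((G.neighborFinset v \ S).card : ℝ) := by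
      rw [Finset.sum_const, hdouble]
      have hcu : ((Finset.univ : Finset (Fin n)).card) • ((n:ℝ)/(r:ℝ)^2)
          = (n:ℝ)^2/(r:ℝ)^2 := by
        simp [nsmul_eq_mul]
        ring
      rw [hcu]
      exact hlow
    obtain ⟨v, _, hv⟩ := Finset.exists_le_of_sum_le ⟨⟨0, hn⟩, Finset.mem_univ _⟩ hsum
    exact ⟨v, hv⟩
  obtain ⟨v, hv⟩ := hex
  exact hv.trans (by exact_mod_cast pickV_spec G hn S v)

theorem stmt_1 (n r : ℕ) (hn : 0 < n) (hr : 0 < r)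
    (G : SimpleGraph (Fin n))
    (hE : ((n : ℝ) ^ 2 / (r : ℝ) ^ 2) ≤ (G.edgeFinset.card : ℝ)) :
    ∃ v : Fin r → Fin n,
      (n : ℝ) / (r : ℝ)
        ≤ ((Finset.univ.biUnion (fun i : Fin r => G.neighborFinset (v i))).card : ℝ) := by
  classical
  have hn' : (0:ℝ) < n := by exact_mod_cast hn
  have hr' : (0:ℝ) < r := by exact_mod_cast hr
  by_cases hΔ : ∃ v : Fin n, (n:ℝ)/r ≤ (G.degree v : ℝ)
  · obtain ⟨v, hv⟩ := hΔ
    refine ⟨fun _ => v, ?_⟩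
    have hsub : G.neighborFinset v ⊆
        Finset.univ.biUnion (fun _i : Fin r => G.neighborFinset v) := by
      intro x hx
      exact Finset.mem_biUnion.2 ⟨⟨0, hr⟩, Finset.mem_univ _, hx⟩
    calc (n:ℝ)/r ≤ (G.degree v : ℝ) := hv
      _ = ((G.neighborFinset v).card : ℝ) := by
          rw [SimpleGraph.card_neighborFinset_eq_degree]
      _ ≤ _ := by exact_mod_cast Finset.card_le_card hsub
  · push_neg at hΔ
    -- greedy construction
    set S := greedyS G hn with hSdef
    have hmono : ∀ i, S i ⊆ S (i+1) := fun i => Finset.subset_union_left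
    -- main induction
    have hmain : ∀ i : ℕ,
        min ((n:ℝ)/r) (i * ((n:ℝ)/(r:ℝ)^2)) ≤ ((S i).card : ℝ) := by
      intro i
      induction i with
      | zero => simp [hSdef, greedyS]
      | succ i ih =>
        by_cases hc : (n:ℝ)/r ≤ ((S i).card : ℝ)
        · have : ((S i).card : ℝ) ≤ ((S (i+1)).card : ℝ) := by
            exact_mod_cast Finset.card_le_card (hmono i)
          exact le_trans (min_le_left _ _) (hc.trans this)
        · push_neg at hc
          have hkey := key_step hn hr G hE hΔ (S i) hc
          have hcard : ((S (i+1)).card : ℝ)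
              = ((G.neighborFinset (pickV G hn (S i)) \ S i).card : ℝ) + ((S i).card : ℝ) := by
            have := Finset.card_sdiff_add_card (G.neighborFinset (pickV G hn (S i))) (S i)
            have h2 : S (i+1) = S i ∪ G.neighborFinset (pickV G hn (S i)) := rfl
            rw [h2, Finset.union_comm]
            exact_mod_cast this.symm
          have hstep : min ((n:ℝ)/r) ((i:ℝ) * ((n:ℝ)/(r:ℝ)^2)) + (n:ℝ)/(r:ℝ)^2
              ≤ ((S (i+1)).card : ℝ) := by
            rw [hcard]
            have : min ((n:ℝ)/r) ((i:ℝ) * ((n:ℝ)/(r:ℝ)^2)) ≤ ((S i).card : ℝ) := ih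
            linarith
          refine le_trans ?_ hstep
          have hc' : (0:ℝ) ≤ (n:ℝ)/(r:ℝ)^2 := by positivity
          push_cast
          rcases le_total ((n:ℝ)/r) ((i:ℝ) * ((n:ℝ)/(r:ℝ)^2)) with h' | h'
          · rw [min_eq_left h']
            exact le_trans (min_le_left _ _) (by linarith)
          · rw [min_eq_right h']
            calc min ((n:ℝ)/r) (((i:ℝ)+1) * ((n:ℝ)/(r:ℝ)^2))
                ≤ ((i:ℝ)+1) * ((n:ℝ)/(r:ℝ)^2) := min_le_right _ _
              _ = (i:ℝ) * ((n:ℝ)/(r:ℝ)^2) + (n:ℝ)/(r:ℝ)^2 := by ring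
    -- conclude at i = r
    have hr2 : min ((n:ℝ)/r) ((r:ℝ) * ((n:ℝ)/(r:ℝ)^2)) = (n:ℝ)/r := by
      have : (r:ℝ) * ((n:ℝ)/(r:ℝ)^2) = (n:ℝ)/r := by field_simp
      rw [this, min_self]
    have hfinal : (n:ℝ)/r ≤ ((S r).card : ℝ) := by
      have := hmain r
      rwa [hr2] at this
    -- the tuple
    refine ⟨fun i : Fin r => pickV G hn (S i.1), ?_⟩
    have hsub : S r ⊆ Finset.univ.biUnion
        (fun i : Fin r => G.neighborFinset (pickV G hn (S i.1))) := by
      have : ∀ k : ℕ, k ≤ r → S k ⊆ Finset.univ.biUnion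
          (fun i : Fin r => G.neighborFinset (pickV G hn (S i.1))) := by
        intro k
        induction k with
        | zero => intro _; simp [hSdef, greedyS]
        | succ k ihk =>
          intro hk
          have h2 : S (k+1) = S k ∪ G.neighborFinset (pickV G hn (S k)) := rfl
          rw [h2]
          refine Finset.union_subset (ihk (Nat.le_of_succ_le hk)) ?_
          intro x hx
          exact Finset.mem_biUnion.2 ⟨⟨k, hk⟩, Finset.mem_univ _, hx⟩
      exact this r le_rfl
    calc (n:ℝ)/r ≤ ((S r).card : ℝ) := hfinal
      _ ≤ _ := by exact_mod_cast Finset.card_le_card hsub
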